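/- arXiv:2010.09148 — 9 statements merged into one kernel-verified Lean document; each statement's English description precedes it below -/
import Mathlib

section
/- Let (L,[·,·]') be a Lie algebra over a field K and let α, β : L → L be commuting Lie algebra morphisms (α([a,b]') = [α(a),α(b)]', β([a,b]') = [β(a),β(b)]', αβ = βα). Define [a,b] := [α(a),β(b)]'. Then (L,[·,·],α,β) is a BiHom-Lie algebra, i.e., it satisfies BiHom-skew-symmetry [β(x),α(y)] = -[β(y),α(x)] and the BiHom-Jacobi identity. -/
/-- The Yau twist of a Lie algebra by two commuting Lie algebra morphisms α, β,
with bracket [a,b] := [α a, β b]', is a BiHom-Lie algebra. -/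
theorem yauTwist_isBiHomLie {K : Type*} [Field K] {L : Type*} [LieRing L] [LieAlgebra K L]
    (α β : L →ₗ[K] L)
    (hα : ∀ a b : L, α ⁅a, b⁆ = ⁅α a, α b⁆)
    (hβ : ∀ a b : L, β ⁅a, b⁆ = ⁅β a, β b⁆)
    (hcomm : ∀ a : L, α (β a) = β (α a)) :
    (∀ x y : L, ⁅α (β x), β (α y)⁆ = - ⁅α (β y), β (α x)⁆) ∧
    (∀ x y z : L,
      ⁅α (β (β x)), β ⁅α (β y), β (α z)⁆⁆ +
      ⁅α (β (β y)), β ⁅α (β z), β (α x)⁆⁆ +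
      ⁅α (β (β z)), β ⁅α (β x), β (α y)⁆⁆ = 0) := by
  have key : ∀ a : L, β (α a) = α (β a) := fun a => (hcomm a).symm
  constructor
  · intro x y
    rw [key x, key y, lie_skew]
  · intro x y z
    simp only [hβ, key]
    exact lie_jacobi (α (β (β x))) (α (β (β y))) (α (β (β z)))
end

section
/- Let (G,[·,·],α,β) be a regular multiplicative BiHom-Lie algebra (α, β bijective). Define [x,y]' := [α⁻¹(x), β⁻¹(y)]. Then (G,[·,·]') is a Lie algebra, i.e., [·,·]' is antisymmetric and satisfies the Jacobi identity. -/
/-- The induced bracket [x,y]' = [α⁻¹ x, β⁻¹ y] of a regular multiplicative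
BiHom-Lie algebra is a Lie bracket: antisymmetric and satisfying the Jacobi identity. -/
theorem inducedLie_of_regularBiHomLie {K : Type*} [Field K] {G : Type*} [AddCommGroup G]
    [Module K G] (α β : G ≃ₗ[K] G) (br : G →ₗ[K] G →ₗ[K] G)
    (hcomm : ∀ x : G, α (β x) = β (α x))
    (hskew : ∀ x y : G, br (β x) (α y) = - br (β y) (α x))
    (hjac : ∀ x y z : G,
      br (β (β x)) (br (β y) (α z)) + br (β (β y)) (br (β z) (α x)) +
        br (β (β z)) (br (β x) (α y)) = 0)
    (hα : ∀ x y : G, α (br x y) = br (α x) (α y))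
    (hβ : ∀ x y : G, β (br x y) = br (β x) (β y)) :
    (∀ x y : G, br (α.symm x) (β.symm y) = - br (α.symm y) (β.symm x)) ∧
    (∀ x y z : G,
      br (α.symm x) (β.symm (br (α.symm y) (β.symm z))) +
      br (α.symm y) (β.symm (br (α.symm z) (β.symm x))) +
      br (α.symm z) (β.symm (br (α.symm x) (β.symm y))) = 0) := by
  have hc1 : ∀ x : G, α (β.symm x) = β.symm (α x) := by
    intro x
    apply β.injective
    rw [β.apply_symm_apply, ← hcomm, β.apply_symm_apply]
  have hc2 : ∀ x : G, β (α.symm x) = α.symm (β x) := by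
    intro x
    apply α.injective
    rw [α.apply_symm_apply, hcomm, α.apply_symm_apply]
  have hc3 : ∀ x : G, α.symm (β.symm x) = β.symm (α.symm x) := by
    intro x
    apply α.injective
    rw [α.apply_symm_apply, hc1, α.apply_symm_apply]
  have hβ' : ∀ x y : G, β.symm (br x y) = br (β.symm x) (β.symm y) := by
    intro x y
    apply β.injective
    rw [β.apply_symm_apply, hβ, β.apply_symm_apply, β.apply_symm_apply]
  constructor
  · intro x y
    have H := hskew (β.symm (α.symm x)) (α.symm (β.symm y))
    simp only [LinearEquiv.apply_symm_apply, hc1, hc2, hc3] at H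
    simpa only [LinearEquiv.apply_symm_apply] using H
  · intro x y z
    have H := hjac (β.symm (β.symm (α.symm x))) (β.symm (β.symm (α.symm y)))
      (α.symm (β.symm (β.symm z)))
    simp only [LinearEquiv.apply_symm_apply, hc1, hc2, hc3] at H
    simp only [hβ', hc3]
    exact H
end

section
/- Let (L,[·,·],α,β) be a BiHom-Lie algebra. If D is a (λ,μ,γ)-α^kβ^l-derivation and D' is a (λ',μ',γ')-α^sβ^t-derivation, then their commutator [D,D'] = D∘D' - D'∘D is a (λλ',μμ',γγ')-α^{k+s}β^{l+t}-derivation. -/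
/-- The commutator of a (λ,μ,γ)-α^kβ^l-derivation and a (λ',μ',γ')-α^sβ^t-derivation
is a (λλ',μμ',γγ')-α^(k+s)β^(l+t)-derivation. -/
theorem commutator_genDerivation {K : Type*} [Field K] {L : Type*} [AddCommGroup L]
    [Module K L] (α β : L →ₗ[K] L) (br : L →ₗ[K] L →ₗ[K] L)
    (hcomm : α ∘ₗ β = β ∘ₗ α)
    (hskew : ∀ x y : L, br (β x) (α y) = - br (β y) (α x))
    (hjac : ∀ x y z : L,
      br (β (β x)) (br (β y) (α z)) + br (β (β y)) (br (β z) (α x)) +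
        br (β (β z)) (br (β x) (α y)) = 0)
    (k l s t : ℕ) (lam mu gam lam' mu' gam' : K) (D D' : L →ₗ[K] L)
    (hDα : D ∘ₗ α = α ∘ₗ D) (hDβ : D ∘ₗ β = β ∘ₗ D)
    (hD'α : D' ∘ₗ α = α ∘ₗ D') (hD'β : D' ∘ₗ β = β ∘ₗ D')
    (hD : ∀ x y : L, lam • D (br x y) =
      mu • br (D x) ((α ^ k * β ^ l) y) + gam • br ((α ^ k * β ^ l) x) (D y))
    (hD' : ∀ x y : L, lam' • D' (br x y) =
      mu' • br (D' x) ((α ^ s * β ^ t) y) + gam' • br ((α ^ s * β ^ t) x) (D' y)) :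
    ((D ∘ₗ D' - D' ∘ₗ D) ∘ₗ α = α ∘ₗ (D ∘ₗ D' - D' ∘ₗ D)) ∧
    ((D ∘ₗ D' - D' ∘ₗ D) ∘ₗ β = β ∘ₗ (D ∘ₗ D' - D' ∘ₗ D)) ∧
    (∀ x y : L, (lam * lam') • (D ∘ₗ D' - D' ∘ₗ D) (br x y) =
      (mu * mu') • br ((D ∘ₗ D' - D' ∘ₗ D) x) ((α ^ (k + s) * β ^ (l + t)) y) +
      (gam * gam') • br ((α ^ (k + s) * β ^ (l + t)) x) ((D ∘ₗ D' - D' ∘ₗ D) y)) := by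
  have cDα : Commute D α := hDα
  have cDβ : Commute D β := hDβ
  have cD'α : Commute D' α := hD'α
  have cD'β : Commute D' β := hD'β
  have cαβ : Commute α β := hcomm
  set A : Module.End K L := α ^ k * β ^ l with hAdef
  set B : Module.End K L := α ^ s * β ^ t with hBdef
  have cDA : Commute D A := (cDα.pow_right k).mul_right (cDβ.pow_right l)
  have cDB : Commute D B := (cDα.pow_right s).mul_right (cDβ.pow_right t)
  have cD'A : Commute D' A := (cD'α.pow_right k).mul_right (cD'β.pow_right l)
  have cD'B : Commute D' B := (cD'α.pow_right s).mul_right (cD'β.pow_right t)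
  have cAB : Commute A B :=
    (((Commute.refl α).pow_pow k s).mul_left (cαβ.symm.pow_pow l s)).mul_right
      ((cαβ.pow_pow k t).mul_left ((Commute.refl β).pow_pow l t))
  have pDA : ∀ v, D (A v) = A (D v) := fun v => by
    simpa [Module.End.mul_apply] using LinearMap.congr_fun cDA.eq v
  have pDB : ∀ v, D (B v) = B (D v) := fun v => by
    simpa [Module.End.mul_apply] using LinearMap.congr_fun cDB.eq v
  have pD'A : ∀ v, D' (A v) = A (D' v) := fun v => by
    simpa [Module.End.mul_apply] using LinearMap.congr_fun cD'A.eq v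
  have pD'B : ∀ v, D' (B v) = B (D' v) := fun v => by
    simpa [Module.End.mul_apply] using LinearMap.congr_fun cD'B.eq v
  have pBA : ∀ v : L, B (A v) = A (B v) := fun v => by
    simpa [Module.End.mul_apply] using LinearMap.congr_fun cAB.eq.symm v
  have hC : A * B = α ^ (k + s) * β ^ (l + t) := by
    rw [hAdef, hBdef, pow_add, pow_add]
    have h := (cαβ.symm.pow_pow l s).eq
    rw [mul_assoc, ← mul_assoc (β ^ l) (α ^ s), h, mul_assoc, ← mul_assoc, ← mul_assoc]
  have pC : ∀ v : L, (α ^ (k + s) * β ^ (l + t)) v = A (B v) := fun v => by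
    rw [← hC]; simp [Module.End.mul_apply]
  refine ⟨Commute.sub_left (cDα.mul_left cD'α) (cD'α.mul_left cDα),
    Commute.sub_left (cDβ.mul_left cD'β) (cD'β.mul_left cDβ), fun x y => ?_⟩
  have E1 : (lam * lam') • D (D' (br x y)) =
      lam • D (mu' • br (D' x) (B y) + gam' • br (B x) (D' y)) := by
    rw [← hD' x y, map_smul, smul_smul]
  have E2 : (lam * lam') • D' (D (br x y)) =
      lam' • D' (mu • br (D x) (A y) + gam • br (A x) (D y)) := by
    rw [← hD x y, map_smul, smul_smul, mul_comm]
  simp only [map_add, map_smul, smul_add, smul_smul] at E1 E2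
  have h1 := hD (D' x) (B y)
  have h2 := hD (B x) (D' y)
  have h3 := hD' (D x) (A y)
  have h4 := hD' (A x) (D y)
  simp only [pDA, pDB, pD'A, pD'B, pBA] at h1 h2 h3 h4 E1 E2
  simp only [LinearMap.sub_apply, LinearMap.comp_apply, pC, map_sub,
    LinearMap.sub_apply, pDA, pDB, pD'A, pD'B, pBA]
  linear_combination (norm := module) E1 - E2 + mu' • h1 + gam' • h2 - mu • h3 - gam • h4
end

section
/- Let (G,[·,·],α,β) be a BiHom-Lie algebra with α and β surjective, and let d be a (λ,μ,γ)-α^kβ^l-derivation with μ ≠ γ. Then [d(x), α^kβ^l(y)] = [α^kβ^l(x), d(y)] for all x,y ∈ G, and consequently λ·d([x,y]) = (μ+γ)·[d(x), α^kβ^l(y)] for all x,y ∈ G. -/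
/-- For a BiHom-Lie algebra with α, β surjective and a (λ,μ,γ)-α^kβ^l-derivation d
with μ ≠ γ, one has [d x, α^kβ^l y] = [α^kβ^l x, d y] and
λ • d [x,y] = (μ+γ) • [d x, α^kβ^l y]. -/
theorem genDerivation_of_mu_ne_gam {K : Type*} [Field K] {G : Type*} [AddCommGroup G]
    [Module K G] (α β : G →ₗ[K] G) (br : G →ₗ[K] G →ₗ[K] G)
    (hcomm : α ∘ₗ β = β ∘ₗ α)
    (hskew : ∀ x y : G, br (β x) (α y) = - br (β y) (α x))
    (hjac : ∀ x y z : G,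
      br (β (β x)) (br (β y) (α z)) + br (β (β y)) (br (β z) (α x)) +
        br (β (β z)) (br (β x) (α y)) = 0)
    (hα : ∀ x y : G, α (br x y) = br (α x) (α y))
    (hβ : ∀ x y : G, β (br x y) = br (β x) (β y))
    (hαsurj : Function.Surjective α) (hβsurj : Function.Surjective β)
    (k l : ℕ) (lam mu gam : K) (hmg : mu ≠ gam) (d : G →ₗ[K] G)
    (hdα : d ∘ₗ α = α ∘ₗ d) (hdβ : d ∘ₗ β = β ∘ₗ d)
    (hd : ∀ x y : G, lam • d (br x y) =
      mu • br (d x) ((α ^ k * β ^ l) y) + gam • br ((α ^ k * β ^ l) x) (d y)) :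
    (∀ x y : G, br (d x) ((α ^ k * β ^ l) y) = br ((α ^ k * β ^ l) x) (d y)) ∧
    (∀ x y : G, lam • d (br x y) = (mu + gam) • br (d x) ((α ^ k * β ^ l) y)) := by
  set φ : G →ₗ[K] G := α ^ k * β ^ l with hφdef
  have hαβ : Commute α β := hcomm
  have hβφ : Commute β φ :=
    (hαβ.symm.pow_right k).mul_right ((Commute.refl β).pow_right l)
  have hαφ : Commute α φ :=
    ((Commute.refl α).pow_right k).mul_right (hαβ.pow_right l)
  have hdα' : Commute d α := hdα
  have hdβ' : Commute d β := hdβ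
  have hdφ : Commute d φ := (hdα'.pow_right k).mul_right (hdβ'.pow_right l)
  have hβφ' : ∀ x, β (φ x) = φ (β x) := fun x => by
    have := LinearMap.congr_fun hβφ x
    simpa [Module.End.mul_apply] using this
  have hαφ' : ∀ x, α (φ x) = φ (α x) := fun x => by
    have := LinearMap.congr_fun hαφ x
    simpa [Module.End.mul_apply] using this
  have hdφ' : ∀ x, d (φ x) = φ (d x) := fun x => by
    have := LinearMap.congr_fun hdφ x
    simpa [Module.End.mul_apply] using this
  have hdα'' : ∀ x, d (α x) = α (d x) := fun x => LinearMap.congr_fun hdα x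
  have hdβ'' : ∀ x, d (β x) = β (d x) := fun x => LinearMap.congr_fun hdβ x
  have key : ∀ a b : G, br (d (β a)) (φ (α b)) = br (φ (β a)) (d (α b)) := by
    intro a b
    have rA : br (d (β a)) (φ (α b)) = - br (φ (β b)) (d (α a)) := by
      rw [hdβ'' a, ← hαφ' b, hskew (d a) (φ b), hβφ' b, ← hdα'' a]
    have rB : br (φ (β a)) (d (α b)) = - br (d (β b)) (φ (α a)) := by
      rw [← hβφ' a, hdα'' b, hskew (φ a) (d b), ← hdβ'' b, hdβ'' b, hαφ' a]
    have e1 := hd (β a) (α b)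
    have e2 := hd (β b) (α a)
    have hs : br (β a) (α b) = - br (β b) (α a) := hskew a b
    set A := br (d (β a)) (φ (α b)) with hA
    set B := br (φ (β a)) (d (α b)) with hB
    set A' := br (d (β b)) (φ (α a)) with hA'
    set B' := br (φ (β b)) (d (α a)) with hB'
    -- e1 : lam • d (br (β a) (α b)) = mu • A + gam • B
    -- e2 : lam • d (br (β b) (α a)) = mu • A' + gam • B'
    have h3 : mu • A + gam • B = mu • B + gam • A := by
      have hA'B : A' = -B := by rw [rB, neg_neg]
      have hB'A : B' = -A := by rw [rA, neg_neg]
      have hthis : lam • d (br (β a) (α b)) = - (mu • A' + gam • B') := by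
        rw [hs, map_neg, smul_neg, e2]
      rw [e1, hA'B, hB'A] at hthis
      rw [hthis]
      simp [smul_neg, add_comm]
    have h4 : (mu - gam) • A = (mu - gam) • B := by
      rw [sub_smul, sub_smul]
      exact sub_eq_sub_iff_add_eq_add.mpr h3
    exact smul_right_injective G (sub_ne_zero.mpr hmg) h4
  have part1 : ∀ x y : G, br (d x) (φ y) = br (φ x) (d y) := by
    intro x y
    obtain ⟨a, rfl⟩ := hβsurj x
    obtain ⟨b, rfl⟩ := hαsurj y
    exact key a b
  refine ⟨part1, fun x y => ?_⟩
  rw [hd x y, ← part1 x y, add_smul]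
end

section
/- Let (G,[·,·],α,β) be a BiHom-Lie algebra with α, β surjective and λ ≠ 0, μ² ≠ γ². Then the set of (λ,μ,γ)-α^kβ^l-derivations equals the set of (λ/(μ+γ), 1, 0)-α^kβ^l-derivations. -/
/-- For a BiHom-Lie algebra with α, β surjective, λ ≠ 0 and μ² ≠ γ², the
(λ,μ,γ)-α^kβ^l-derivations are exactly the (λ/(μ+γ),1,0)-α^kβ^l-derivations. -/
theorem genDer_eq_of_sq_ne {G : Type*} [AddCommGroup G] [Module ℂ G]
    (α β : G →ₗ[ℂ] G) (br : G →ₗ[ℂ] G →ₗ[ℂ] G)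
    (hcomm : α ∘ₗ β = β ∘ₗ α)
    (hskew : ∀ x y : G, br (β x) (α y) = - br (β y) (α x))
    (hjac : ∀ x y z : G,
      br (β (β x)) (br (β y) (α z)) + br (β (β y)) (br (β z) (α x)) +
        br (β (β z)) (br (β x) (α y)) = 0)
    (hα : ∀ x y : G, α (br x y) = br (α x) (α y))
    (hβ : ∀ x y : G, β (br x y) = br (β x) (β y))
    (hαsurj : Function.Surjective α) (hβsurj : Function.Surjective β)
    (k l : ℕ) (lam mu gam : ℂ) (hlam : lam ≠ 0) (hmg : mu ^ 2 ≠ gam ^ 2) :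
    ∀ d : G →ₗ[ℂ] G, d ∘ₗ α = α ∘ₗ d → d ∘ₗ β = β ∘ₗ d →
      ((∀ x y : G, lam • d (br x y) =
          mu • br (d x) ((α ^ k * β ^ l) y) + gam • br ((α ^ k * β ^ l) x) (d y)) ↔
       (∀ x y : G, (lam / (mu + gam)) • d (br x y) = br (d x) ((α ^ k * β ^ l) y))) := by
  intro d hdα hdβ
  have hmgadd : mu + gam ≠ 0 := by
    intro h
    apply hmg
    have : mu = -gam := eq_neg_of_add_eq_zero_left h
    rw [this]; ring
  have hmgsub : mu - gam ≠ 0 := by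
    intro h
    exact hmg (by rw [sub_eq_zero.mp h])
  have cαβ : Commute α β := hcomm
  have cφα : Commute (α ^ k * β ^ l) α :=
    Commute.mul_left ((Commute.refl α).pow_left k) (cαβ.symm.pow_left l)
  have cφβ : Commute (α ^ k * β ^ l) β :=
    Commute.mul_left (cαβ.pow_left k) ((Commute.refl β).pow_left l)
  have hφα : ∀ x : G, (α ^ k * β ^ l) (α x) = α ((α ^ k * β ^ l) x) := by
    intro x
    simpa [Module.End.mul_apply] using LinearMap.congr_fun cφα.eq x
  have hφβ : ∀ x : G, (α ^ k * β ^ l) (β x) = β ((α ^ k * β ^ l) x) := by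
    intro x
    simpa [Module.End.mul_apply] using LinearMap.congr_fun cφβ.eq x
  have hdα' : ∀ x : G, d (α x) = α (d x) := by
    intro x
    simpa [LinearMap.comp_apply] using LinearMap.congr_fun hdα x
  have hdβ' : ∀ x : G, d (β x) = β (d x) := by
    intro x
    simpa [LinearMap.comp_apply] using LinearMap.congr_fun hdβ x
  constructor
  · intro h u v
    obtain ⟨x, rfl⟩ := hβsurj u
    obtain ⟨y, rfl⟩ := hαsurj v
    have E1 := h (β x) (α y)
    have E2 := h (β y) (α x)
    rw [hdβ' x, hdα' y, hφα y, hφβ x] at E1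
    rw [hdβ' y, hdα' x, hφα x, hφβ y] at E2
    set A := br (β (d x)) (α ((α ^ k * β ^ l) y)) with hA
    set B := br (β ((α ^ k * β ^ l) x)) (α (d y)) with hB
    have sk1 : br (β (d y)) (α ((α ^ k * β ^ l) x)) = -B := hskew (d y) ((α ^ k * β ^ l) x)
    have sk2 : br (β ((α ^ k * β ^ l) y)) (α (d x)) = -A := hskew ((α ^ k * β ^ l) y) (d x)
    rw [sk1, sk2, hskew y x, map_neg, smul_neg] at E2
    -- E1 : lam • d (br (β x) (α y)) = mu • A + gam • B
    -- E2 : -(lam • d (br (β x) (α y))) = mu • (-B) + gam • (-A)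
    have hAB : A = B := by
      rw [E1] at E2
      have h3 := neg_eq_iff_eq_neg.mp E2
      simp only [smul_neg, neg_add, neg_neg] at h3
      have key : (mu - gam) • A = (mu - gam) • B := by
        rw [sub_smul, sub_smul, sub_eq_sub_iff_add_eq_add]
        exact h3
      exact smul_right_injective G hmgsub key
    have E : lam • d (br (β x) (α y)) = (mu + gam) • A := by
      rw [E1, hAB, add_smul]
    rw [hdβ' x, hφα y]
    calc (lam / (mu + gam)) • d (br (β x) (α y))
        = (mu + gam)⁻¹ • (lam • d (br (β x) (α y))) := by
          rw [smul_smul, div_eq_inv_mul]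
      _ = (mu + gam)⁻¹ • ((mu + gam) • A) := by rw [E]
      _ = A := by rw [smul_smul, inv_mul_cancel₀ hmgadd, one_smul]
  · intro h u v
    obtain ⟨x, rfl⟩ := hβsurj u
    obtain ⟨y, rfl⟩ := hαsurj v
    have h1 := h (β x) (α y)
    have h2 := h (β y) (α x)
    rw [hdβ' x, hφα y] at h1
    rw [hdβ' y, hφα x] at h2
    have hB : br ((α ^ k * β ^ l) (β x)) (d (α y))
        = (lam / (mu + gam)) • d (br (β x) (α y)) := by
      rw [hφβ x, hdα' y, hskew ((α ^ k * β ^ l) x) (d y)]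
      rw [show br (β (d y)) (α ((α ^ k * β ^ l) x)) = (lam / (mu + gam)) • d (br (β y) (α x)) from h2.symm]
      rw [hskew y x, map_neg, smul_neg, neg_neg]
    rw [hB, hdβ' x, hφα y, ← h1]
    rw [smul_smul, smul_smul, ← add_smul]
    congr 1
    field_simp
  done
end

section
/- Let (G,[·,·],α,β) be a BiHom-Lie algebra with α, β surjective, λ ≠ 0, μ ≠ 0 and γ = -μ. Then a linear map d (commuting with α,β) is a (λ,μ,-μ)-α^kβ^l-derivation if and only if it is both a (1,0,0)-α^kβ^l-derivation and a (0,1,-1)-α^kβ^l-derivation, which is in turn equivalent to being a (1,1,-1)-α^kβ^l-derivation. -/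
/-- For a BiHom-Lie algebra with α, β surjective, λ ≠ 0, μ ≠ 0 and γ = -μ:
a map d commuting with α, β is a (λ,μ,-μ)-α^kβ^l-derivation iff it is both a
(1,0,0)- and a (0,1,-1)-α^kβ^l-derivation, iff it is a (1,1,-1)-α^kβ^l-derivation. -/
theorem genDer_of_gam_eq_neg_mu {G : Type*} [AddCommGroup G] [Module ℂ G]
    (α β : G →ₗ[ℂ] G) (br : G →ₗ[ℂ] G →ₗ[ℂ] G)
    (hcomm : α ∘ₗ β = β ∘ₗ α)
    (hskew : ∀ x y : G, br (β x) (α y) = - br (β y) (α x))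
    (hjac : ∀ x y z : G,
      br (β (β x)) (br (β y) (α z)) + br (β (β y)) (br (β z) (α x)) +
        br (β (β z)) (br (β x) (α y)) = 0)
    (hα : ∀ x y : G, α (br x y) = br (α x) (α y))
    (hβ : ∀ x y : G, β (br x y) = br (β x) (β y))
    (hαsurj : Function.Surjective α) (hβsurj : Function.Surjective β)
    (k l : ℕ) (lam mu : ℂ) (hlam : lam ≠ 0) (hmu : mu ≠ 0) :
    ∀ d : G →ₗ[ℂ] G, d ∘ₗ α = α ∘ₗ d → d ∘ₗ β = β ∘ₗ d →
      (((∀ x y : G, lam • d (br x y) =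
          mu • br (d x) ((α ^ k * β ^ l) y) + (-mu) • br ((α ^ k * β ^ l) x) (d y)) ↔
        ((∀ x y : G, d (br x y) = 0) ∧
         (∀ x y : G, br (d x) ((α ^ k * β ^ l) y) = br ((α ^ k * β ^ l) x) (d y)))) ∧
       ((∀ x y : G, lam • d (br x y) =
          mu • br (d x) ((α ^ k * β ^ l) y) + (-mu) • br ((α ^ k * β ^ l) x) (d y)) ↔
        (∀ x y : G, d (br x y) =
          br (d x) ((α ^ k * β ^ l) y) - br ((α ^ k * β ^ l) x) (d y)))) := by
  intro d hdα hdβ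
  set A : G →ₗ[ℂ] G := α ^ k * β ^ l with hAdef
  have hdα' : ∀ x, d (α x) = α (d x) := fun x => LinearMap.congr_fun hdα x
  have hdβ' : ∀ x, d (β x) = β (d x) := fun x => LinearMap.congr_fun hdβ x
  have hcomm' : ∀ x, α (β x) = β (α x) := fun x => LinearMap.congr_fun hcomm x
  have hpowα : ∀ (f : G →ₗ[ℂ] G), (∀ x, f (α x) = α (f x)) →
      ∀ (n : ℕ) (x : G), f ((α ^ n) x) = (α ^ n) (f x) := by
    intro f hf n
    induction n with
    | zero => simp
    | succ n ih =>
      intro x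
      rw [pow_succ]
      simp only [Module.End.mul_apply]
      rw [ih, hf]
  have hpowβ : ∀ (f : G →ₗ[ℂ] G), (∀ x, f (β x) = β (f x)) →
      ∀ (n : ℕ) (x : G), f ((β ^ n) x) = (β ^ n) (f x) := by
    intro f hf n
    induction n with
    | zero => simp
    | succ n ih =>
      intro x
      rw [pow_succ]
      simp only [Module.End.mul_apply]
      rw [ih, hf]
  have hApow : ∀ (f : G →ₗ[ℂ] G), (∀ x, f (α x) = α (f x)) → (∀ x, f (β x) = β (f x)) →
      ∀ x, f (A x) = A (f x) := by
    intro f h1 h2 x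
    rw [hAdef]
    simp only [Module.End.mul_apply]
    rw [hpowα f h1, hpowβ f h2]
  have hAd : ∀ x, d (A x) = A (d x) := hApow d hdα' hdβ'
  have hAα : ∀ x, α (A x) = A (α x) := hApow α (fun _ => rfl) hcomm'
  have hAβ : ∀ x, β (A x) = β (A x) := fun _ => rfl
  have hAβ' : ∀ x, β (A x) = A (β x) := hApow β (fun x => (hcomm' x).symm) (fun _ => rfl)
  -- key lemma: any (c,m,-m)-derivation with c,m ≠ 0 satisfies br (d x) (A y) = br (A x) (d y)
  have key : ∀ (c m : ℂ), m ≠ 0 →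
      (∀ x y : G, c • d (br x y) = m • br (d x) (A y) + (-m) • br (A x) (d y)) →
      ∀ x y : G, br (d x) (A y) = br (A x) (d y) := by
    intro c m hm h x y
    obtain ⟨v, rfl⟩ := hβsurj x
    obtain ⟨u, rfl⟩ := hαsurj y
    have h1 := h (β u) (α v)
    have h2 := h (β v) (α u)
    have hT1 : br (d (β u)) (A (α v)) = - br (A (β v)) (d (α u)) := by
      calc br (d (β u)) (A (α v)) = br (β (d u)) (α (A v)) := by rw [hdβ', ← hAα]
        _ = - br (β (A v)) (α (d u)) := hskew _ _
        _ = - br (A (β v)) (d (α u)) := by rw [hAβ', ← hdα']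
    have hT2 : br (A (β u)) (d (α v)) = - br (d (β v)) (A (α u)) := by
      calc br (A (β u)) (d (α v)) = br (β (A u)) (α (d v)) := by rw [← hAβ', hdα']
        _ = - br (β (d v)) (α (A u)) := hskew _ _
        _ = - br (d (β v)) (A (α u)) := by rw [← hdβ', hAα]
    rw [hT1, hT2] at h1
    have hz : br (β u) (α v) + br (β v) (α u) = 0 := by
      rw [hskew u v]; abel
    have hL : c • d (br (β u) (α v)) + c • d (br (β v) (α u)) = 0 := by
      rw [← smul_add, ← map_add, hz, map_zero, smul_zero]
    rw [h1, h2] at hL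
    have h3 : (2 * m) • (br (d (β v)) (A (α u)) - br (A (β v)) (d (α u))) = 0 := by
      rw [← hL]; module
    have h4 := smul_eq_zero.mp h3
    rcases h4 with h4 | h4
    · exact absurd h4 (by simpa using hm)
    · exact sub_eq_zero.mp h4
  refine ⟨⟨?_, ?_⟩, ?_, ?_⟩
  · intro h
    have hbr := key lam mu hmu h
    refine ⟨fun x y => ?_, hbr⟩
    have := h x y
    rw [hbr x y] at this
    have : lam • d (br x y) = 0 := by rw [this]; module
    rcases smul_eq_zero.mp this with h' | h'
    · exact absurd h' hlam
    · exact h'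
  · rintro ⟨h0, h1⟩ x y
    rw [h0 x y, h1 x y]
    module
  · intro h
    have hbr := key lam mu hmu h
    intro x y
    have := h x y
    rw [hbr x y] at this
    have h0 : lam • d (br x y) = 0 := by rw [this]; module
    rcases smul_eq_zero.mp h0 with h' | h'
    · exact absurd h' hlam
    · rw [h', hbr x y]; abel
  · intro h
    have h' : ∀ x y : G, (1 : ℂ) • d (br x y) =
        (1 : ℂ) • br (d x) (A y) + (-(1 : ℂ)) • br (A x) (d y) := by
      intro x y
      rw [h x y]; module
    have hbr := key 1 1 one_ne_zero h'
    intro x y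
    rw [h x y, hbr x y]
    module
end

section
/- Let d be an α^kβ^l-derivation and φ an α^tβ^s-element of the centroid of a multiplicative BiHom-Lie algebra G. Then d∘φ is an α^{k+t}β^{l+s}-derivation of G if and only if the commutator d∘φ - φ∘d is an α^{k+t}β^{l+s}-central derivation of G. -/
/-- For d an α^kβ^l-derivation and φ in the α^tβ^s-centroid of a multiplicative
BiHom-Lie algebra, d∘φ is an α^(k+t)β^(l+s)-derivation iff d∘φ - φ∘d is an
α^(k+t)β^(l+s)-central derivation. -/
theorem der_comp_centroid_iff_central {K : Type*} [Field K] {G : Type*} [AddCommGroup G]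
    [Module K G] (α β : G →ₗ[K] G) (br : G →ₗ[K] G →ₗ[K] G)
    (hcomm : α ∘ₗ β = β ∘ₗ α)
    (hskew : ∀ u v : G, br (β u) (α v) = - br (β v) (α u))
    (hjac : ∀ u v w : G,
      br (β (β u)) (br (β v) (α w)) + br (β (β v)) (br (β w) (α u)) +
        br (β (β w)) (br (β u) (α v)) = 0)
    (hα : ∀ u v : G, α (br u v) = br (α u) (α v))
    (hβ : ∀ u v : G, β (br u v) = br (β u) (β v))
    (k l t s : ℕ) (d φ : G →ₗ[K] G)
    (hdα : d ∘ₗ α = α ∘ₗ d) (hdβ : d ∘ₗ β = β ∘ₗ d)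
    (hd : ∀ u v : G, d (br u v) =
      br (d u) ((α ^ k * β ^ l) v) + br ((α ^ k * β ^ l) u) (d v))
    (hφα : φ ∘ₗ α = α ∘ₗ φ) (hφβ : φ ∘ₗ β = β ∘ₗ φ)
    (hφ : ∀ u v : G, φ (br u v) = br (φ u) ((α ^ t * β ^ s) v) ∧
      φ (br u v) = br ((α ^ t * β ^ s) u) (φ v)) :
    ((∀ u v : G, (d ∘ₗ φ) (br u v) =
        br ((d ∘ₗ φ) u) ((α ^ (k + t) * β ^ (l + s)) v) +
        br ((α ^ (k + t) * β ^ (l + s)) u) ((d ∘ₗ φ) v)) ↔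
     (∀ u v : G, (d ∘ₗ φ - φ ∘ₗ d) (br u v) = 0 ∧
        br ((d ∘ₗ φ - φ ∘ₗ d) u) ((α ^ (k + t) * β ^ (l + s)) v) = 0 ∧
        br ((α ^ (k + t) * β ^ (l + s)) u) ((d ∘ₗ φ - φ ∘ₗ d) v) = 0)) := by
  have cαβ : Commute α β := hcomm
  have cdα : Commute d α := hdα
  have cdβ : Commute d β := hdβ
  have cφα : Commute φ α := hφα
  have cφβ : Commute φ β := hφβ
  set A := α ^ k * β ^ l with hA
  set T := α ^ t * β ^ s with hT
  set P := α ^ (k + t) * β ^ (l + s) with hPdef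
  have cdT : Commute d T := (cdα.pow_right t).mul_right (cdβ.pow_right s)
  have cφA : Commute φ A := (cφα.pow_right k).mul_right (cφβ.pow_right l)
  have c1 : Commute (α ^ k) (α ^ t) := (Commute.refl α).pow_pow k t
  have c2 : Commute (α ^ k) (β ^ s) := cαβ.pow_pow k s
  have c3 : Commute (β ^ l) (α ^ t) := cαβ.symm.pow_pow l t
  have c4 : Commute (β ^ l) (β ^ s) := (Commute.refl β).pow_pow l s
  have cAT : Commute A T :=
    Commute.mul_left (c1.mul_right c2) (c3.mul_right c4)
  have hPAT : P = A * T := by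
    rw [hPdef, hA, hT, pow_add, pow_add, mul_assoc, mul_assoc, ← mul_assoc (α ^ t),
      ← c3.eq, mul_assoc]
  have hPTA : P = T * A := hPAT.trans cAT.eq
  have pTA : ∀ x, T (A x) = P x := fun x => by rw [hPTA]; rfl
  have pAT : ∀ x, A (T x) = P x := fun x => by rw [hPAT]; rfl
  have pdT : ∀ x, d (T x) = T (d x) := fun x => by
    simpa [Module.End.mul_apply] using DFunLike.congr_fun cdT.eq x
  have pAφ : ∀ x, A (φ x) = φ (A x) := fun x => by
    simpa [Module.End.mul_apply] using (DFunLike.congr_fun cφA.eq x).symm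
  have e1 : ∀ u v, φ (d (br u v)) = br (φ (d u)) (P v) + br (P u) (φ (d v)) := by
    intro u v
    rw [hd, map_add, (hφ (d u) (A v)).1, (hφ (A u) (d v)).2, pTA, pTA]
  have e2 : ∀ u v, d (φ (br u v)) = br (d (φ u)) (P v) + br (P u) (φ (d v)) := by
    intro u v
    rw [(hφ u v).1, hd, pAT, pAφ, pdT]
    congr 1
    calc br (φ (A u)) (T (d v)) = φ (br (A u) (d v)) := (hφ _ _).1.symm
      _ = br (T (A u)) (φ (d v)) := (hφ _ _).2
      _ = br (P u) (φ (d v)) := by rw [pTA]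
  have e3 : ∀ u v, d (φ (br u v)) = br (φ (d u)) (P v) + br (P u) (d (φ v)) := by
    intro u v
    rw [(hφ u v).2, hd, pdT, pAφ, pAT]
    congr 1
    calc br (T (d u)) (φ (A v)) = φ (br (d u) (A v)) := (hφ _ _).2.symm
      _ = br (φ (d u)) (T (A v)) := (hφ _ _).1
      _ = br (φ (d u)) (P v) := by rw [pTA]
  constructor
  · intro H u v
    simp only [LinearMap.comp_apply] at H
    simp only [LinearMap.sub_apply, LinearMap.comp_apply]
    have h4 := H u v
    have h3 : br (P u) (d (φ v)) = br (P u) (φ (d v)) := by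
      have h := (e2 u v).symm.trans h4
      exact (add_left_cancel h).symm
    have h2 : br (d (φ u)) (P v) = br (φ (d u)) (P v) := by
      have h := (e3 u v).symm.trans h4
      exact (add_right_cancel h).symm
    refine ⟨?_, ?_, ?_⟩
    · rw [e3 u v, e1 u v, sub_eq_zero, h3]
    · rw [map_sub, LinearMap.sub_apply, sub_eq_zero, h2]
    · rw [map_sub, sub_eq_zero, h3]
  · intro C u v
    simp only [LinearMap.sub_apply, LinearMap.comp_apply] at C
    simp only [LinearMap.comp_apply]
    have hc := (C u v).2.2
    rw [map_sub, sub_eq_zero] at hc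
    rw [e2 u v, hc]
end

section
/- Let (L,[·,·],α,β) be a BiHom-Lie algebra. The α^kβ^l-quasi-centroid QC_{α^kβ^l}(L) = {d : d commutes with α,β and [d(x),α^kβ^l(y)] = [α^kβ^l(x),d(y)] for all x,y} is closed under the Jordan product μ(f,g) = ½(f∘g + g∘f) when the degrees are added; in particular, if f,g ∈ QC_{α^kβ^l}(L) ∩ QC-type maps then μ(f,g) ∈ QC_{α^{2k}β^{2l}}(L), and (QC_{α⁰β⁰}(L), μ) is a Jordan algebra. -/
private lemma qc_key {L : Type*} [AddCommGroup L] [Module ℂ L]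
    (br : L →ₗ[ℂ] L →ₗ[ℂ] L) (γ f g : L →ₗ[ℂ] L)
    (hfγ : ∀ x, f (γ x) = γ (f x)) (hgγ : ∀ x, g (γ x) = γ (g x))
    (hf : ∀ u v, br (f u) (γ v) = br (γ u) (f v))
    (hg : ∀ u v, br (g u) (γ v) = br (γ u) (g v))
    (u v : L) :
    br (((2⁻¹ : ℂ) • (f ∘ₗ g + g ∘ₗ f)) u) (γ (γ v)) =
      br (γ (γ u)) (((2⁻¹ : ℂ) • (f ∘ₗ g + g ∘ₗ f)) v) := by
  have h1 : br (f (g u)) (γ (γ v)) = br (γ (γ u)) (g (f v)) := by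
    rw [hf (g u) (γ v), ← hgγ, hfγ, hg (γ u) (f v)]
  have h2 : br (g (f u)) (γ (γ v)) = br (γ (γ u)) (f (g v)) := by
    rw [hg (f u) (γ v), ← hfγ, hgγ, hf (γ u) (g v)]
  simp only [LinearMap.smul_apply, LinearMap.add_apply, LinearMap.comp_apply,
    map_smul, map_add, LinearMap.smul_apply, LinearMap.add_apply]
  rw [h1, h2, add_comm]

/-- The quasi-centroids of a multiplicative BiHom-Lie algebra are closed under the
Jordan product μ(f,g) = ½(f∘g + g∘f) with addition of degrees; in particular
(QC_{α⁰β⁰}(L), μ) is a commutative algebra satisfying the Jordan identity. -/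
theorem quasiCentroid_jordan {L : Type*} [AddCommGroup L] [Module ℂ L]
    (α β : L →ₗ[ℂ] L) (br : L →ₗ[ℂ] L →ₗ[ℂ] L)
    (hcomm : α ∘ₗ β = β ∘ₗ α)
    (hskew : ∀ u v : L, br (β u) (α v) = - br (β v) (α u))
    (hjac : ∀ u v w : L,
      br (β (β u)) (br (β v) (α w)) + br (β (β v)) (br (β w) (α u)) +
        br (β (β w)) (br (β u) (α v)) = 0)
    (hα : ∀ u v : L, α (br u v) = br (α u) (α v))
    (hβ : ∀ u v : L, β (br u v) = br (β u) (β v)) :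
    let QC : ℕ → ℕ → (L →ₗ[ℂ] L) → Prop := fun k l d =>
      d ∘ₗ α = α ∘ₗ d ∧ d ∘ₗ β = β ∘ₗ d ∧
      ∀ u v : L, br (d u) ((α ^ k * β ^ l) v) = br ((α ^ k * β ^ l) u) (d v)
    let jp : (L →ₗ[ℂ] L) → (L →ₗ[ℂ] L) → (L →ₗ[ℂ] L) := fun f g =>
      (2⁻¹ : ℂ) • (f ∘ₗ g + g ∘ₗ f)
    (∀ (k l : ℕ) (f g : L →ₗ[ℂ] L), QC k l f → QC k l g → QC (2 * k) (2 * l) (jp f g)) ∧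
    (∀ f g : L →ₗ[ℂ] L, QC 0 0 f → QC 0 0 g → QC 0 0 (jp f g)) ∧
    (∀ f g : L →ₗ[ℂ] L, jp f g = jp g f) ∧
    (∀ f g : L →ₗ[ℂ] L, QC 0 0 f → QC 0 0 g →
      jp (jp f g) (jp f f) = jp f (jp g (jp f f))) := by
  intro QC jp
  have hcαβ : Commute α β := by
    show α * β = β * α
    simpa only [Module.End.mul_eq_comp] using hcomm
  have main : ∀ (k l : ℕ) (f g : L →ₗ[ℂ] L), QC k l f → QC k l g →
      QC (2 * k) (2 * l) (jp f g) := by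
    intro k l f g ⟨hfα, hfβ, hfbr⟩ ⟨hgα, hgβ, hgbr⟩
    have cfα : Commute f α := by
      show f * α = α * f
      simpa only [Module.End.mul_eq_comp] using hfα
    have cfβ : Commute f β := by
      show f * β = β * f
      simpa only [Module.End.mul_eq_comp] using hfβ
    have cgα : Commute g α := by
      show g * α = α * g
      simpa only [Module.End.mul_eq_comp] using hgα
    have cgβ : Commute g β := by
      show g * β = β * g
      simpa only [Module.End.mul_eq_comp] using hgβ
    set γ : L →ₗ[ℂ] L := α ^ k * β ^ l with hγ
    have cfγ : Commute f γ := (cfα.pow_right k).mul_right (cfβ.pow_right l)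
    have cgγ : Commute g γ := (cgα.pow_right k).mul_right (cgβ.pow_right l)
    have hfγ : ∀ x, f (γ x) = γ (f x) := fun x => by
      simpa only [Module.End.mul_apply] using LinearMap.congr_fun cfγ x
    have hgγ : ∀ x, g (γ x) = γ (g x) := fun x => by
      simpa only [Module.End.mul_apply] using LinearMap.congr_fun cgγ x
    have hsq : α ^ (2 * k) * β ^ (2 * l) = γ * γ := by
      rw [hγ, (hcαβ.pow_pow k l).symm.mul_mul_mul_comm (α ^ k) (β ^ l),
        ← pow_add, ← pow_add, two_mul, two_mul]
    have cjα : Commute (jp f g) α := by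
      show Commute ((2⁻¹ : ℂ) • (f ∘ₗ g + g ∘ₗ f)) α
      simp only [← Module.End.mul_eq_comp]
      exact ((cfα.mul_left cgα).add_left (cgα.mul_left cfα)).smul_left _
    have cjβ : Commute (jp f g) β := by
      show Commute ((2⁻¹ : ℂ) • (f ∘ₗ g + g ∘ₗ f)) β
      simp only [← Module.End.mul_eq_comp]
      exact ((cfβ.mul_left cgβ).add_left (cgβ.mul_left cfβ)).smul_left _
    refine ⟨?_, ?_, ?_⟩
    · simpa only [Module.End.mul_eq_comp] using cjα.eq
    · simpa only [Module.End.mul_eq_comp] using cjβ.eq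
    · intro u v
      rw [hsq]
      simpa only [Module.End.mul_apply] using
        qc_key br γ f g hfγ hgγ hfbr hgbr u v
  refine ⟨main, ?_, ?_, ?_⟩
  · intro f g hf hg
    simpa using main 0 0 f g hf hg
  · intro f g
    show (2⁻¹ : ℂ) • (f ∘ₗ g + g ∘ₗ f) = (2⁻¹ : ℂ) • (g ∘ₗ f + f ∘ₗ g)
    rw [add_comm]
  · intro f g _ _
    show (2⁻¹ : ℂ) • (((2⁻¹ : ℂ) • (f ∘ₗ g + g ∘ₗ f)) ∘ₗ ((2⁻¹ : ℂ) • (f ∘ₗ f + f ∘ₗ f))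
          + ((2⁻¹ : ℂ) • (f ∘ₗ f + f ∘ₗ f)) ∘ₗ ((2⁻¹ : ℂ) • (f ∘ₗ g + g ∘ₗ f)))
        = (2⁻¹ : ℂ) • (f ∘ₗ ((2⁻¹ : ℂ) • (g ∘ₗ ((2⁻¹ : ℂ) • (f ∘ₗ f + f ∘ₗ f))
          + ((2⁻¹ : ℂ) • (f ∘ₗ f + f ∘ₗ f)) ∘ₗ g))
          + ((2⁻¹ : ℂ) • (g ∘ₗ ((2⁻¹ : ℂ) • (f ∘ₗ f + f ∘ₗ f))
          + ((2⁻¹ : ℂ) • (f ∘ₗ f + f ∘ₗ f)) ∘ₗ g)) ∘ₗ f)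
    simp only [← Module.End.mul_eq_comp, smul_add, add_mul, mul_add, smul_mul_assoc,
      mul_smul_comm, smul_smul, mul_assoc]
    abel
end

section
/- Every decomposable 2-dimensional multiplicative BiHom-Lie algebra L (a direct sum of two nonzero ideals) is non-regular (α or β is not bijective) and satisfies L = [L,L] ⊕ C(L), where C(L) is the center of L. -/
open Submodule LinearMap Module

/-- Auxiliary lemma: given a basis adapted to the decomposition with the bracket
diagonal, `c₁ ≠ 0`, conclude the direct sum decomposition `L = [L,L] ⊕ C(L)`. -/
theorem aux_compl {L : Type*} [AddCommGroup L] [Module ℂ L]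
    (br : L →ₗ[ℂ] L →ₗ[ℂ] L) (e₁ e₂ : L) (c₁ c₂ : ℂ)
    (he₁ : e₁ ≠ 0) (he₂ : e₂ ≠ 0)
    (hcompl : IsCompl (span ℂ {e₁}) (span ℂ {e₂}))
    (hb11 : br e₁ e₁ = c₁ • e₁) (hb12 : br e₁ e₂ = 0)
    (hb21 : br e₂ e₁ = 0) (hb22 : br e₂ e₂ = c₂ • e₂)
    (hc₁ : c₁ ≠ 0) :
    IsCompl (Submodule.span ℂ {z : L | ∃ u v : L, br u v = z})
      ((⨅ v : L, LinearMap.ker (br.flip v)) ⊓ (⨅ v : L, LinearMap.ker (br v))) := by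
  have hx : ∀ x : L, ∃ s t : ℂ, x = s • e₁ + t • e₂ := by
    intro x
    have hxmem : x ∈ span ℂ {e₁} ⊔ span ℂ {e₂} := by
      rw [hcompl.sup_eq_top]; trivial
    obtain ⟨y, hy, z, hz, rfl⟩ := Submodule.mem_sup.mp hxmem
    obtain ⟨s, rfl⟩ := Submodule.mem_span_singleton.mp hy
    obtain ⟨t, rfl⟩ := Submodule.mem_span_singleton.mp hz
    exact ⟨s, t, rfl⟩
  have hbr : ∀ s t s' t' : ℂ,
      br (s • e₁ + t • e₂) (s' • e₁ + t' • e₂)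
        = (s * s' * c₁) • e₁ + (t * t' * c₂) • e₂ := by
    intro s t s' t'
    simp only [map_add, map_smul, LinearMap.add_apply, LinearMap.smul_apply,
      hb11, hb12, hb21, hb22, smul_smul, smul_zero, add_zero, zero_add]
    module
  -- membership in the center
  have hcenter : ∀ x : L,
      (x ∈ (⨅ v : L, LinearMap.ker (br.flip v)) ⊓ (⨅ v : L, LinearMap.ker (br v)))
        ↔ (∀ v : L, br x v = 0) ∧ (∀ v : L, br v x = 0) := by
    intro x
    simp [Submodule.mem_inf, Submodule.mem_iInf, LinearMap.mem_ker, LinearMap.flip_apply]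
  have he₁D : e₁ ∈ Submodule.span ℂ {z : L | ∃ u v : L, br u v = z} := by
    have h : br e₁ e₁ ∈ Submodule.span ℂ {z : L | ∃ u v : L, br u v = z} :=
      Submodule.subset_span ⟨e₁, e₁, rfl⟩
    have : (c₁⁻¹ • br e₁ e₁ : L) ∈ _ := Submodule.smul_mem _ c₁⁻¹ h
    rwa [hb11, smul_smul, inv_mul_cancel₀ hc₁, one_smul] at this
  by_cases hc₂ : c₂ = 0
  · -- D = span{e₁}, C = span{e₂}
    have hD : Submodule.span ℂ {z : L | ∃ u v : L, br u v = z} = span ℂ {e₁} := by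
      apply le_antisymm
      · rw [Submodule.span_le]
        rintro z ⟨u, v, rfl⟩
        obtain ⟨s, t, rfl⟩ := hx u
        obtain ⟨s', t', rfl⟩ := hx v
        rw [hbr, hc₂, mul_zero, zero_smul, add_zero]
        exact Submodule.smul_mem _ _ (Submodule.mem_span_singleton_self e₁)
      · rw [Submodule.span_le, Set.singleton_subset_iff]
        exact he₁D
    have hC : ((⨅ v : L, LinearMap.ker (br.flip v)) ⊓ (⨅ v : L, LinearMap.ker (br v)))
        = span ℂ {e₂} := by
      ext x
      rw [hcenter]
      constructor
      · rintro ⟨h1, _⟩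
        obtain ⟨s, t, rfl⟩ := hx x
        have := h1 ((1:ℂ) • e₁ + (0:ℂ) • e₂)
        rw [hbr] at this
        simp only [mul_one, mul_zero, zero_mul, zero_smul, add_zero] at this
        have hs : s * c₁ = 0 := by
          rcases smul_eq_zero.mp this with h | h
          · exact h
          · exact absurd h he₁
        have hs0 : s = 0 := by
          rcases mul_eq_zero.mp hs with h | h
          · exact h
          · exact absurd h hc₁
        rw [hs0, zero_smul, zero_add]
        exact Submodule.smul_mem _ _ (Submodule.mem_span_singleton_self e₂)
      · intro hmem
        obtain ⟨t, rfl⟩ := Submodule.mem_span_singleton.mp hmem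
        constructor
        · intro v
          obtain ⟨s', t', rfl⟩ := hx v
          rw [show (t • e₂ : L) = (0:ℂ) • e₁ + t • e₂ by simp, hbr, hc₂]
          simp
        · intro v
          obtain ⟨s', t', rfl⟩ := hx v
          rw [show (t • e₂ : L) = (0:ℂ) • e₁ + t • e₂ by simp, hbr, hc₂]
          simp
    rw [hD, hC]
    exact hcompl
  · -- c₂ ≠ 0 : D = ⊤, C = ⊥
    have he₂D : e₂ ∈ Submodule.span ℂ {z : L | ∃ u v : L, br u v = z} := by
      have h : br e₂ e₂ ∈ Submodule.span ℂ {z : L | ∃ u v : L, br u v = z} :=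
        Submodule.subset_span ⟨e₂, e₂, rfl⟩
      have : (c₂⁻¹ • br e₂ e₂ : L) ∈ _ := Submodule.smul_mem _ c₂⁻¹ h
      rwa [hb22, smul_smul, inv_mul_cancel₀ hc₂, one_smul] at this
    have hD : Submodule.span ℂ {z : L | ∃ u v : L, br u v = z} = ⊤ := by
      rw [eq_top_iff, ← hcompl.sup_eq_top]
      apply sup_le <;> rw [Submodule.span_le, Set.singleton_subset_iff]
      · exact he₁D
      · exact he₂D
    have hC : ((⨅ v : L, LinearMap.ker (br.flip v)) ⊓ (⨅ v : L, LinearMap.ker (br v)))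
        = ⊥ := by
      rw [eq_bot_iff]
      intro x hmem
      rw [hcenter] at hmem
      obtain ⟨h1, _⟩ := hmem
      obtain ⟨s, t, rfl⟩ := hx x
      have h1' := h1 ((1:ℂ) • e₁ + (0:ℂ) • e₂)
      rw [hbr] at h1'
      simp only [mul_one, mul_zero, zero_mul, zero_smul, add_zero] at h1'
      have hs0 : s = 0 := by
        rcases smul_eq_zero.mp h1' with h | h
        · rcases mul_eq_zero.mp h with h | h
          · exact h
          · exact absurd h hc₁
        · exact absurd h he₁
      have h2' := h1 ((0:ℂ) • e₁ + (1:ℂ) • e₂)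
      rw [hbr] at h2'
      simp only [mul_one, mul_zero, zero_mul, zero_smul, zero_add] at h2'
      have ht0 : t = 0 := by
        rcases smul_eq_zero.mp h2' with h | h
        · rcases mul_eq_zero.mp h with h | h
          · exact h
          · exact absurd h hc₂
        · exact absurd h he₂
      simp [hs0, ht0]
    rw [hD, hC]
    exact isCompl_top_bot

/-- Every decomposable 2-dimensional multiplicative BiHom-Lie algebra is non-regular
and satisfies L = [L,L] ⊕ C(L). -/
theorem decomposable_two_dim {L : Type*} [AddCommGroup L] [Module ℂ L]
    [FiniteDimensional ℂ L] (hdim : Module.finrank ℂ L = 2)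
    (α β : L →ₗ[ℂ] L) (br : L →ₗ[ℂ] L →ₗ[ℂ] L)
    (hcomm : α ∘ₗ β = β ∘ₗ α)
    (hskew : ∀ u v : L, br (β u) (α v) = - br (β v) (α u))
    (hjac : ∀ u v w : L,
      br (β (β u)) (br (β v) (α w)) + br (β (β v)) (br (β w) (α u)) +
        br (β (β w)) (br (β u) (α v)) = 0)
    (hα : ∀ u v : L, α (br u v) = br (α u) (α v))
    (hβ : ∀ u v : L, β (br u v) = br (β u) (β v))
    (hnontriv : ¬ ∀ u v : L, br u v = 0)
    (hdecomp : ∃ I₁ I₂ : Submodule ℂ L, I₁ ≠ ⊥ ∧ I₂ ≠ ⊥ ∧ IsCompl I₁ I₂ ∧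
      ((∀ u ∈ I₁, α u ∈ I₁) ∧ (∀ u ∈ I₁, β u ∈ I₁) ∧
        (∀ u ∈ I₁, ∀ v : L, br u v ∈ I₁) ∧ (∀ u ∈ I₁, ∀ v : L, br v u ∈ I₁)) ∧
      ((∀ u ∈ I₂, α u ∈ I₂) ∧ (∀ u ∈ I₂, β u ∈ I₂) ∧
        (∀ u ∈ I₂, ∀ v : L, br u v ∈ I₂) ∧ (∀ u ∈ I₂, ∀ v : L, br v u ∈ I₂))) :
    ¬ (Function.Bijective α ∧ Function.Bijective β) ∧
    IsCompl (Submodule.span ℂ {z : L | ∃ u v : L, br u v = z})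
      ((⨅ v : L, LinearMap.ker (br.flip v)) ⊓ (⨅ v : L, LinearMap.ker (br v))) := by
  obtain ⟨I₁, I₂, hI₁, hI₂, hcompl,
    ⟨hα1, hβ1, hbl1, hbr1⟩, ⟨hα2, hβ2, hbl2, hbr2⟩⟩ := hdecomp
  -- both ideals are one-dimensional
  have hsum : finrank ℂ I₁ + finrank ℂ I₂ = 2 := by
    rw [Submodule.finrank_add_eq_of_isCompl hcompl, hdim]
  have hpos1 : 0 < finrank ℂ I₁ := by
    rw [finrank_pos_iff]
    exact Submodule.nontrivial_iff_ne_bot.mpr hI₁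
  have hpos2 : 0 < finrank ℂ I₂ := by
    rw [finrank_pos_iff]
    exact Submodule.nontrivial_iff_ne_bot.mpr hI₂
  have hr1 : finrank ℂ I₁ = 1 := by omega
  have hr2 : finrank ℂ I₂ = 1 := by omega
  obtain ⟨e₁, he₁I, he₁⟩ := Submodule.exists_mem_ne_zero_of_ne_bot hI₁
  obtain ⟨e₂, he₂I, he₂⟩ := Submodule.exists_mem_ne_zero_of_ne_bot hI₂
  have hspan1 : span ℂ {e₁} = I₁ := by
    apply Submodule.eq_of_le_of_finrank_le
    · rw [Submodule.span_le, Set.singleton_subset_iff]; exact he₁I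
    · rw [hr1, finrank_span_singleton he₁]
  have hspan2 : span ℂ {e₂} = I₂ := by
    apply Submodule.eq_of_le_of_finrank_le
    · rw [Submodule.span_le, Set.singleton_subset_iff]; exact he₂I
    · rw [hr2, finrank_span_singleton he₂]
  have hdisj : ∀ x : L, x ∈ I₁ → x ∈ I₂ → x = 0 := by
    intro x h1 h2
    have : x ∈ I₁ ⊓ I₂ := ⟨h1, h2⟩
    rwa [hcompl.inf_eq_bot, Submodule.mem_bot] at this
  -- cross brackets vanish
  have hb12 : br e₁ e₂ = 0 := hdisj _ (hbl1 e₁ he₁I e₂) (hbr2 e₂ he₂I e₁)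
  have hb21 : br e₂ e₁ = 0 := hdisj _ (hbr1 e₁ he₁I e₂) (hbl2 e₂ he₂I e₁)
  -- diagonal brackets
  obtain ⟨c₁, hb11⟩ : ∃ c : ℂ, br e₁ e₁ = c • e₁ := by
    have : br e₁ e₁ ∈ span ℂ {e₁} := hspan1 ▸ hbl1 e₁ he₁I e₁
    obtain ⟨c, hc⟩ := Submodule.mem_span_singleton.mp this
    exact ⟨c, hc.symm⟩
  obtain ⟨c₂, hb22⟩ : ∃ c : ℂ, br e₂ e₂ = c • e₂ := by
    have : br e₂ e₂ ∈ span ℂ {e₂} := hspan2 ▸ hbl2 e₂ he₂I e₂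
    obtain ⟨c, hc⟩ := Submodule.mem_span_singleton.mp this
    exact ⟨c, hc.symm⟩
  have hcomplS : IsCompl (span ℂ {e₁}) (span ℂ {e₂}) := by
    rw [hspan1, hspan2]; exact hcompl
  -- decomposition of elements and bracket formula
  have hx : ∀ x : L, ∃ s t : ℂ, x = s • e₁ + t • e₂ := by
    intro x
    have hxmem : x ∈ span ℂ {e₁} ⊔ span ℂ {e₂} := by
      rw [hcomplS.sup_eq_top]; trivial
    obtain ⟨y, hy, z, hz, rfl⟩ := Submodule.mem_sup.mp hxmem
    obtain ⟨s, rfl⟩ := Submodule.mem_span_singleton.mp hy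
    obtain ⟨t, rfl⟩ := Submodule.mem_span_singleton.mp hz
    exact ⟨s, t, rfl⟩
  have hbrf : ∀ s t s' t' : ℂ,
      br (s • e₁ + t • e₂) (s' • e₁ + t' • e₂)
        = (s * s' * c₁) • e₁ + (t * t' * c₂) • e₂ := by
    intro s t s' t'
    simp only [map_add, map_smul, LinearMap.add_apply, LinearMap.smul_apply,
      hb11, hb12, hb21, hb22, smul_smul, smul_zero, add_zero, zero_add]
    module
  -- nontriviality forces c₁ ≠ 0 or c₂ ≠ 0
  have hcne : c₁ ≠ 0 ∨ c₂ ≠ 0 := by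
    by_contra h
    push_neg at h
    obtain ⟨h1, h2⟩ := h
    apply hnontriv
    intro u v
    obtain ⟨s, t, rfl⟩ := hx u
    obtain ⟨s', t', rfl⟩ := hx v
    rw [hbrf, h1, h2]
    simp
  -- skew symmetry at (e, e) gives a b c = 0
  have hzero : ∀ (e : L) (c : ℂ), e ∈ I₁ ⊔ I₂ → br e e = c • e →
      ∀ a b : ℂ, α e = a • e → β e = b • e → b * a * c = 0 ∨ e = 0 := by
    intro e c _ hbee a b hae hbe
    have hs := hskew e e
    have hzero : br (β e) (α e) = 0 := by
      have h2 : br (β e) (α e) + br (β e) (α e) = 0 := by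
        nth_rewrite 1 [hs]; abel
      have : (2 : ℂ) • br (β e) (α e) = 0 := by
        rw [two_smul]; exact h2
      rcases smul_eq_zero.mp this with h | h
      · exact absurd h two_ne_zero
      · exact h
    rw [hbe, hae, map_smul, map_smul, LinearMap.smul_apply, hbee, smul_smul, smul_smul] at hzero
    rcases smul_eq_zero.mp hzero with h | h
    · left; linear_combination h
    · right; exact h
  -- scalars for α, β on e₁, e₂
  obtain ⟨a₁, ha₁⟩ : ∃ a : ℂ, α e₁ = a • e₁ := by
    have : α e₁ ∈ span ℂ {e₁} := hspan1 ▸ hα1 e₁ he₁I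
    obtain ⟨a, ha⟩ := Submodule.mem_span_singleton.mp this
    exact ⟨a, ha.symm⟩
  obtain ⟨b₁, hb₁⟩ : ∃ b : ℂ, β e₁ = b • e₁ := by
    have : β e₁ ∈ span ℂ {e₁} := hspan1 ▸ hβ1 e₁ he₁I
    obtain ⟨b, hb⟩ := Submodule.mem_span_singleton.mp this
    exact ⟨b, hb.symm⟩
  obtain ⟨a₂, ha₂⟩ : ∃ a : ℂ, α e₂ = a • e₂ := by
    have : α e₂ ∈ span ℂ {e₂} := hspan2 ▸ hα2 e₂ he₂I
    obtain ⟨a, ha⟩ := Submodule.mem_span_singleton.mp this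
    exact ⟨a, ha.symm⟩
  obtain ⟨b₂, hb₂⟩ : ∃ b : ℂ, β e₂ = b • e₂ := by
    have : β e₂ ∈ span ℂ {e₂} := hspan2 ▸ hβ2 e₂ he₂I
    obtain ⟨b, hb⟩ := Submodule.mem_span_singleton.mp this
    exact ⟨b, hb.symm⟩
  have hbac1 : b₁ * a₁ * c₁ = 0 := by
    rcases hzero e₁ c₁ (le_sup_left (a := I₁) (b := I₂) he₁I) hb11 a₁ b₁ ha₁ hb₁ with h | h
    · exact h
    · exact absurd h he₁
  have hbac2 : b₂ * a₂ * c₂ = 0 := by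
    rcases hzero e₂ c₂ (le_sup_right (a := I₁) (b := I₂) he₂I) hb22 a₂ b₂ ha₂ hb₂ with h | h
    · exact h
    · exact absurd h he₂
  constructor
  · -- non-regularity
    rintro ⟨hA, hB⟩
    have key : ∀ (e : L) (a b c : ℂ), e ≠ 0 → α e = a • e → β e = b • e →
        b * a * c = 0 → c = 0 := by
      intro e a b c hne hae hbe habc
      rcases mul_eq_zero.mp habc with h | h
      · rcases mul_eq_zero.mp h with h' | h'
        · exfalso
          apply hne
          apply hB.injective
          rw [hbe, h', zero_smul, map_zero]
        · exfalso
          apply hne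
          apply hA.injective
          rw [hae, h', zero_smul, map_zero]
      · exact h
    rcases hcne with h | h
    · exact h (key e₁ a₁ b₁ c₁ he₁ ha₁ hb₁ hbac1)
    · exact h (key e₂ a₂ b₂ c₂ he₂ ha₂ hb₂ hbac2)
  · -- the direct sum decomposition
    by_cases hc₁ : c₁ = 0
    · have hc₂ : c₂ ≠ 0 := by
        rcases hcne with h | h
        · exact absurd hc₁ h
        · exact h
      exact aux_compl br e₂ e₁ c₂ c₁ he₂ he₁ hcomplS.symm hb22 hb21 hb12 hb11 hc₂
    · exact aux_compl br e₁ e₂ c₁ c₂ he₁ he₂ hcomplS hb11 hb12 hb21 hb22 hc₁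
end
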